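/- Let p be a prime, k ≥ 2, and 0 ≤ n with m ≥ n + 2. Let χ1,…,χk be characters mod p^m, at least one of which is primitive mod p^m. If either (a) not all of χ1,…,χk are primitive mod p^m, or (b) the product character χ1⋯χk is not induced by a primitive character mod p^{m−n}, then J_{p^n}(χ1,…,χk,p^m) = 0. -/
import Mathlib

open Complex

section Helpers

lemma ker_cast {N d : ℕ} [NeZero N] [NeZero d] (hd : d ∣ N) {x : ZMod N}
    (hx : ZMod.castHom hd (ZMod d) x = 0) : ∃ c : ZMod N, x = (d : ZMod N) * c := by
  rw [ZMod.castHom_apply, ← ZMod.natCast_val] at hx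
  obtain ⟨c, hc⟩ := (ZMod.natCast_eq_zero_iff _ _).mp hx
  refine ⟨(c : ZMod N), ?_⟩
  have hxx : ((x.val : ℕ) : ZMod N) = x := by rw [ZMod.natCast_val, ZMod.cast_id]
  rw [← hxx, hc]; push_cast; ring

lemma cast_sub_cast {N d : ℕ} [NeZero N] [NeZero d] (hd : d ∣ N) {x y : ZMod N}
    (hxy : ZMod.castHom hd (ZMod d) x = ZMod.castHom hd (ZMod d) y) :
    ∃ c : ZMod N, x = y + (d : ZMod N) * c := by
  obtain ⟨c, hc⟩ := ker_cast hd (x := x - y) (by rw [map_sub, hxy, sub_self])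
  exact ⟨c, by linear_combination hc⟩

lemma isUnit_cast_iff {p M : ℕ} (hp : p.Prime) (hM : M ≠ 0) [NeZero (p ^ M)] {x : ZMod (p ^ M)} :
    IsUnit x ↔ IsUnit (ZMod.castHom (dvd_pow_self p hM) (ZMod p) x) := by
  haveI : NeZero p := ⟨hp.ne_zero⟩
  constructor
  · exact fun h => h.map _
  · intro h
    have hx : ((x.val : ℕ) : ZMod (p ^ M)) = x := by rw [ZMod.natCast_val, ZMod.cast_id]
    have hcast : ZMod.castHom (dvd_pow_self p hM) (ZMod p) x = ((x.val : ℕ) : ZMod p) := by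
      rw [ZMod.castHom_apply, ← ZMod.natCast_val]
    rw [hcast, ZMod.isUnit_iff_coprime] at h
    rw [← hx, ZMod.isUnit_iff_coprime]
    exact Nat.Coprime.pow_right _ h

lemma factorsThrough_of_dvd {N d e : ℕ} {χ : DirichletCharacter ℂ N} (hde : d ∣ e) (heN : e ∣ N)
    (hd : χ.FactorsThrough d) : χ.FactorsThrough e := by
  obtain ⟨hdN, χ₀, rfl⟩ := hd
  exact ⟨heN, DirichletCharacter.changeLevel hde χ₀,
    by rw [← DirichletCharacter.changeLevel_trans]⟩

lemma char_congr {p M e : ℕ} (hp : p.Prime) [NeZero (p ^ M)] (he1 : 1 ≤ e) (heM : e ≤ M)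
    {χ : DirichletCharacter ℂ (p ^ M)} (hχ : χ.FactorsThrough (p ^ e)) {x y : ZMod (p ^ M)}
    (hxy : ZMod.castHom (pow_dvd_pow p heM) (ZMod (p ^ e)) x
      = ZMod.castHom (pow_dvd_pow p heM) (ZMod (p ^ e)) y) :
    χ x = χ y := by
  have hM0 : M ≠ 0 := by omega
  have he0 : e ≠ 0 := by omega
  have hp1 : ZMod.castHom (dvd_pow_self p hM0) (ZMod p) x
      = ZMod.castHom (dvd_pow_self p hM0) (ZMod p) y := by
    have hcomp := ZMod.castHom_comp (dvd_pow_self p he0) (pow_dvd_pow p heM)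
    have h1 := congrArg (ZMod.castHom (dvd_pow_self p he0) (ZMod p)) hxy
    rw [← RingHom.comp_apply, ← RingHom.comp_apply, hcomp] at h1
    exact h1
  by_cases hx : IsUnit x
  · have hy : IsUnit y := by
      rw [isUnit_cast_iff hp hM0] at hx ⊢
      rwa [← hp1]
    obtain ⟨hdvd, χ₀, rfl⟩ := hχ
    have h1 := DirichletCharacter.changeLevel_eq_cast_of_dvd χ₀ hdvd hx.unit
    have h2 := DirichletCharacter.changeLevel_eq_cast_of_dvd χ₀ hdvd hy.unit
    rw [hx.unit_spec] at h1
    rw [hy.unit_spec] at h2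
    have hcc : (ZMod.cast x : ZMod (p ^ e)) = ZMod.cast y := by
      simpa [ZMod.castHom_apply] using hxy
    rw [h1, h2, hcc]
  · have hy : ¬ IsUnit y := by
      rw [isUnit_cast_iff hp hM0] at hx ⊢
      rwa [← hp1]
    rw [MulChar.map_nonunit _ hx, MulChar.map_nonunit _ hy]

end Helpers

section P2
variable {p M : ℕ}

lemma prim_exists (hp : p.Prime) (hM : 2 ≤ M) [NeZero (p ^ M)]
    {χ : DirichletCharacter ℂ (p ^ M)} (hχ : χ.IsPrimitive) :
    ∃ t : ZMod (p ^ M), χ (1 + ((p ^ (M - 1) : ℕ) : ZMod (p ^ M)) * t) ≠ 1 := by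
  by_contra hcon
  push_neg at hcon
  have hdvd : p ^ (M - 1) ∣ p ^ M := pow_dvd_pow p (by omega)
  haveI : NeZero (p ^ (M - 1)) := ⟨pow_ne_zero _ hp.ne_zero⟩
  have hft : χ.FactorsThrough (p ^ (M - 1)) := by
    rw [DirichletCharacter.factorsThrough_iff_ker_unitsMap hdvd]
    intro u hu
    rw [MonoidHom.mem_ker] at hu ⊢
    have h1 : ZMod.castHom hdvd (ZMod (p ^ (M - 1))) (u : ZMod (p ^ M)) = 1 := by
      have := congrArg Units.val hu
      simpa [ZMod.unitsMap_def] using this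
    have h0 : ZMod.castHom hdvd (ZMod (p ^ (M - 1))) ((u : ZMod (p ^ M)) - 1) = 0 := by
      rw [map_sub, h1, map_one, sub_self]
    obtain ⟨c, hc⟩ := ker_cast hdvd h0
    have hu1 : (u : ZMod (p ^ M)) = 1 + ((p ^ (M - 1) : ℕ) : ZMod (p ^ M)) * c := by
      push_cast at hc ⊢
      linear_combination hc
    have h2 := hcon c
    rw [← hu1] at h2
    ext
    rw [MulChar.coe_toUnitHom]
    simpa using h2
  have hle : χ.conductor ≤ p ^ (M - 1) := Nat.sInf_le hft
  rw [DirichletCharacter.isPrimitive_def] at hχ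
  have h3 : p ^ (M - 1) < p ^ M := Nat.pow_lt_pow_right hp.one_lt (by omega)
  omega

lemma sum_shift_zero (hp : p.Prime) (hM : 2 ≤ M) [NeZero (p ^ M)]
    {χ : DirichletCharacter ℂ (p ^ M)} (hχ : χ.IsPrimitive) (x : ZMod (p ^ M)) :
    ∑ t : ZMod (p ^ M), χ (x + ((p ^ (M - 1) : ℕ) : ZMod (p ^ M)) * t) = 0 := by
  have hM0 : M ≠ 0 := by omega
  haveI : NeZero p := ⟨hp.ne_zero⟩
  set c : ZMod (p ^ M) := ((p ^ (M - 1) : ℕ) : ZMod (p ^ M)) with hcdef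
  have hcc : c * c = 0 := by
    rw [hcdef, ← Nat.cast_mul, ZMod.natCast_eq_zero_iff, ← pow_add]
    exact pow_dvd_pow p (by omega)
  have hT : ∑ t : ZMod (p ^ M), χ (1 + c * t) = 0 := by
    obtain ⟨t0, ht0⟩ := prim_exists hp hM hχ
    have key : ∑ t : ZMod (p ^ M), χ (1 + c * t)
        = χ (1 + c * t0) * ∑ t : ZMod (p ^ M), χ (1 + c * t) := by
      rw [Finset.mul_sum]
      rw [← Equiv.sum_comp (Equiv.addLeft t0) (fun t => χ (1 + c * t))]
      apply Finset.sum_congr rfl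
      intro t _
      rw [← map_mul]
      congr 1
      simp only [Equiv.coe_addLeft]
      linear_combination (- t0 * t) * hcc
    have h2 : (χ (1 + c * t0) - 1) * ∑ t : ZMod (p ^ M), χ (1 + c * t) = 0 := by
      linear_combination - key
    rcases mul_eq_zero.mp h2 with h3 | h3
    · exact absurd (by linear_combination h3) ht0
    · exact h3
  by_cases hx : IsUnit x
  · have hre : ∑ t : ZMod (p ^ M), χ (x + c * t)
        = ∑ t : ZMod (p ^ M), χ (x + c * (x * t)) := by
      rw [← Equiv.sum_comp (Units.mulLeft hx.unit) (fun t => χ (x + c * t))]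
      apply Finset.sum_congr rfl
      intro t _
      simp [Units.mulLeft]
    rw [hre]
    have h4 : ∀ t : ZMod (p ^ M), χ (x + c * (x * t)) = χ x * χ (1 + c * t) := by
      intro t
      rw [← map_mul]
      congr 1
      ring
    simp_rw [h4, ← Finset.mul_sum, hT, mul_zero]
  · apply Finset.sum_eq_zero
    intro t _
    apply MulChar.map_nonunit
    intro hunit
    apply hx
    rw [isUnit_cast_iff hp hM0] at hunit ⊢
    have hc0 : ZMod.castHom (dvd_pow_self p hM0) (ZMod p) c = 0 := by
      rw [hcdef, map_natCast, ZMod.natCast_eq_zero_iff]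
      exact dvd_pow_self p (by omega)
    rw [map_add, map_mul, hc0, zero_mul, add_zero] at hunit
    exact hunit

lemma prod_char_apply {N k : ℕ} (χ : Fin k → DirichletCharacter ℂ N) {a : ZMod N}
    (ha : IsUnit a) (s : Finset (Fin k)) : (∏ i ∈ s, χ i) a = ∏ i ∈ s, χ i a := by
  classical
  induction s using Finset.induction with
  | empty => simpa using MulChar.one_apply ha
  | @insert i s hi ih =>
      rw [Finset.prod_insert hi, Finset.prod_insert hi, MulChar.mul_apply, ih]

/-- The generalized Jacobi sum `J_B(χ₁,…,χ_k, q)`: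
the sum over all tuples `(x₁,…,x_k)` modulo `q` with `x₁+⋯+x_k ≡ B (mod q)`
of `χ₁(x₁)⋯χ_k(x_k)`. -/
noncomputable def Jsum {q : ℕ} [NeZero q] {k : ℕ}
    (χ : Fin k → DirichletCharacter ℂ q) (B : ZMod q) : ℂ :=
  ∑ x : Fin k → ZMod q, if (∑ i, x i) = B then ∏ i, χ i (x i) else 0

lemma Jsum_unit_mul {N : ℕ} [NeZero N] {k : ℕ} (χ : Fin k → DirichletCharacter ℂ N)
    {u : ZMod N} (hu : IsUnit u) (B : ZMod N) :
    Jsum χ (u * B) = (∏ i, χ i) u * Jsum χ B := by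
  rw [prod_char_apply χ hu, Jsum, Jsum, Finset.mul_sum]
  rw [← Equiv.sum_comp (Equiv.piCongrRight (fun _ : Fin k => Units.mulLeft hu.unit))
    (fun x : Fin k → ZMod N => if (∑ i, x i) = u * B then ∏ i, χ i (x i) else 0)]
  apply Finset.sum_congr rfl
  intro x _
  have happ : ∀ l, (Equiv.piCongrRight (fun _ : Fin k => Units.mulLeft hu.unit)) x l
      = u * x l := by
    intro l
    simp [Units.mulLeft]
  simp only [happ]
  rw [← Finset.mul_sum]
  have hcond : ((u * ∑ i, x i) = u * B) ↔ ((∑ i, x i) = B) :=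
    ⟨fun h => hu.mul_left_cancel h, fun h => by rw [h]⟩
  rw [if_congr hcond rfl rfl]
  split_ifs with hif
  · rw [← Finset.prod_mul_distrib]
    exact Finset.prod_congr rfl fun l _ => map_mul _ _ _
  · rw [mul_zero]

lemma caseB {p m n k : ℕ} [NeZero (p ^ m)] (hp : p.Prime) (hn : n ≤ m)
    (χ : Fin k → DirichletCharacter ℂ (p ^ m))
    (hnd : ¬ (∏ i, χ i).conductor ∣ p ^ (m - n)) :
    Jsum χ ((p ^ n : ℕ) : ZMod (p ^ m)) = 0 := by
  haveI : NeZero p := ⟨hp.ne_zero⟩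
  set ψ := ∏ i, χ i with hψ
  have hdvd : p ^ (m - n) ∣ p ^ m := pow_dvd_pow p (by omega)
  haveI : NeZero (p ^ (m - n)) := ⟨pow_ne_zero _ hp.ne_zero⟩
  have hnft : ¬ ψ.FactorsThrough (p ^ (m - n)) := by
    intro hft
    apply hnd
    have hle : ψ.conductor ≤ p ^ (m - n) := Nat.sInf_le hft
    obtain ⟨d, hdm, hcd⟩ := (Nat.dvd_prime_pow hp).mp ψ.conductor_dvd_level
    rw [hcd] at hle ⊢
    exact pow_dvd_pow p ((Nat.pow_le_pow_iff_right hp.one_lt).mp hle)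
  rw [DirichletCharacter.factorsThrough_iff_ker_unitsMap hdvd] at hnft
  obtain ⟨u, hu1, hu2⟩ := SetLike.not_le_iff_exists.mp hnft
  rw [MonoidHom.mem_ker] at hu1
  rw [MonoidHom.mem_ker] at hu2
  have hψu : ψ (u : ZMod (p ^ m)) ≠ 1 := by
    intro hone
    apply hu2
    ext
    rw [MulChar.coe_toUnitHom]
    simpa using hone
  have h1 : ZMod.castHom hdvd (ZMod (p ^ (m - n))) (u : ZMod (p ^ m)) = 1 := by
    have := congrArg Units.val hu1
    simpa [ZMod.unitsMap_def] using this
  have h0 : ZMod.castHom hdvd (ZMod (p ^ (m - n))) ((u : ZMod (p ^ m)) - 1) = 0 := by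
    rw [map_sub, h1, map_one, sub_self]
  obtain ⟨c, hc⟩ := ker_cast hdvd h0
  have hz : ((p ^ (m - n) : ℕ) : ZMod (p ^ m)) * ((p ^ n : ℕ) : ZMod (p ^ m)) = 0 := by
    rw [← Nat.cast_mul, ← pow_add]
    have hmn : m - n + n = m := by omega
    rw [hmn]
    exact ZMod.natCast_self _
  have hBu : (u : ZMod (p ^ m)) * ((p ^ n : ℕ) : ZMod (p ^ m)) = ((p ^ n : ℕ) : ZMod (p ^ m)) := by
    linear_combination ((p ^ n : ℕ) : ZMod (p ^ m)) * hc + c * hz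
  have hJ := Jsum_unit_mul χ u.isUnit ((p ^ n : ℕ) : ZMod (p ^ m))
  rw [hBu] at hJ
  have h2 : (ψ (u : ZMod (p ^ m)) - 1) * Jsum χ ((p ^ n : ℕ) : ZMod (p ^ m)) = 0 := by
    rw [hψ]
    linear_combination -hJ
  rcases mul_eq_zero.mp h2 with h3 | h3
  · exact absurd (by linear_combination h3) hψu
  · exact h3

lemma caseA {p m k : ℕ} [NeZero (p ^ m)] (hp : p.Prime) (hm2 : 2 ≤ m)
    (χ : Fin k → DirichletCharacter ℂ (p ^ m)) {i j : Fin k} (hij : i ≠ j)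
    (hi : (χ i).IsPrimitive) (hj : ¬ (χ j).IsPrimitive) (B : ZMod (p ^ m)) :
    Jsum χ B = 0 := by
  haveI : NeZero p := ⟨hp.ne_zero⟩
  set c : ZMod (p ^ m) := ((p ^ (m - 1) : ℕ) : ZMod (p ^ m)) with hcdef
  have hjft : (χ j).FactorsThrough (p ^ (m - 1)) := by
    obtain ⟨d, hdm, hcd⟩ := (Nat.dvd_prime_pow hp).mp (χ j).conductor_dvd_level
    have hdm' : d ≠ m := fun he => hj (by rw [DirichletCharacter.isPrimitive_def, hcd, he])
    exact factorsThrough_of_dvd (by rw [hcd]; exact pow_dvd_pow p (by omega))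
      (pow_dvd_pow p (by omega)) (DirichletCharacter.factorsThrough_conductor (χ j))
  have key : ∀ t : ZMod (p ^ m), Jsum χ B
      = ∑ x : Fin k → ZMod (p ^ m), if (∑ l, x l) = B
          then χ i (x i + c * t) * (χ j (x j) * ∏ l ∈ (Finset.univ.erase i).erase j, χ l (x l))
          else 0 := by
    intro t
    set δ : Fin k → ZMod (p ^ m) :=
      fun l => (if l = i then c * t else 0) + (if l = j then -(c * t) else 0) with hδ
    rw [Jsum, ← Equiv.sum_comp (Equiv.piCongrRight (fun l : Fin k => Equiv.addRight (δ l)))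
      (fun x : Fin k → ZMod (p ^ m) => if (∑ l, x l) = B then ∏ l, χ l (x l) else 0)]
    apply Finset.sum_congr rfl
    intro x _
    have happ : ∀ l, (Equiv.piCongrRight (fun l : Fin k => Equiv.addRight (δ l))) x l
        = x l + δ l := fun l => rfl
    simp only [happ]
    have hsum : (∑ l, (x l + δ l)) = ∑ l, x l := by
      rw [Finset.sum_add_distrib, hδ]
      rw [Finset.sum_add_distrib, Finset.sum_ite_eq' Finset.univ i (fun _ => c * t),
        Finset.sum_ite_eq' Finset.univ j (fun _ => -(c * t))]
      simp
    rw [hsum]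
    congr 1
    rw [← Finset.mul_prod_erase Finset.univ (fun l => χ l (x l + δ l)) (Finset.mem_univ i),
      ← Finset.mul_prod_erase _ (fun l => χ l (x l + δ l))
        (Finset.mem_erase.mpr ⟨Ne.symm hij, Finset.mem_univ j⟩)]
    have hδi : δ i = c * t := by simp [hδ, hij]
    have hδj : δ j = -(c * t) := by simp [hδ, Ne.symm hij]
    congr 1
    · rw [hδi]
    congr 1
    · rw [hδj]
      apply char_congr hp (e := m - 1) (by omega) (by omega) hjft
      have hc0 : ZMod.castHom (pow_dvd_pow p (show m - 1 ≤ m by omega)) (ZMod (p ^ (m - 1))) c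
          = 0 := by
        rw [hcdef, map_natCast, ZMod.natCast_self]
      rw [map_add, map_neg, map_mul, hc0, zero_mul, neg_zero, add_zero]
    · apply Finset.prod_congr rfl
      intro l hl
      rw [Finset.mem_erase, Finset.mem_erase] at hl
      have hδl : δ l = 0 := by simp [hδ, hl.1, hl.2.1]
      rw [hδl, add_zero]
  have h0 : ∑ _t : ZMod (p ^ m), Jsum χ B = 0 := by
    calc ∑ t : ZMod (p ^ m), Jsum χ B
        = ∑ t : ZMod (p ^ m), ∑ x : Fin k → ZMod (p ^ m), (if (∑ l, x l) = B
          then χ i (x i + c * t) * (χ j (x j) * ∏ l ∈ (Finset.univ.erase i).erase j, χ l (x l))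
          else 0) := Finset.sum_congr rfl (fun t _ => key t)
      _ = ∑ x : Fin k → ZMod (p ^ m), ∑ t : ZMod (p ^ m), (if (∑ l, x l) = B
          then χ i (x i + c * t) * (χ j (x j) * ∏ l ∈ (Finset.univ.erase i).erase j, χ l (x l))
          else 0) := Finset.sum_comm
      _ = 0 := by
          apply Finset.sum_eq_zero
          intro x _
          by_cases hB : (∑ l, x l) = B
          · simp only [if_pos hB]
            rw [← Finset.sum_mul, sum_shift_zero hp hm2 hi (x i), zero_mul]
          · simp [hB]
  rw [Finset.sum_const, Finset.card_univ, ZMod.card, nsmul_eq_mul] at h0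
  rcases mul_eq_zero.mp h0 with h3 | h3
  · exact absurd h3 (Nat.cast_ne_zero.mpr (NeZero.ne _))
  · exact h3

lemma caseC {p m n e k : ℕ} [NeZero (p ^ m)] (hp : p.Prime) (he1 : 1 ≤ e)
    (hme : m = e + n + 1)
    (χ : Fin k → DirichletCharacter ℂ (p ^ m)) (i : Fin k) (hi : (χ i).IsPrimitive)
    (hft : (∏ l, χ l).FactorsThrough (p ^ e)) :
    Jsum χ ((p ^ n : ℕ) : ZMod (p ^ m)) = 0 := by
  haveI : NeZero p := ⟨hp.ne_zero⟩
  haveI : NeZero (p ^ (m - 1)) := ⟨pow_ne_zero _ hp.ne_zero⟩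
  have hm2 : 2 ≤ m := by omega
  set B : ZMod (p ^ m) := ((p ^ n : ℕ) : ZMod (p ^ m)) with hBdef
  set c : ZMod (p ^ m) := ((p ^ (m - 1) : ℕ) : ZMod (p ^ m)) with hcdef
  set D := ZMod.castHom (pow_dvd_pow p (show m - 1 ≤ m by omega)) (ZMod (p ^ (m - 1)))
    with hDdef
  have hDc : D c = 0 := by rw [hcdef, hDdef, map_natCast, ZMod.natCast_self]
  have step3 : ∀ B' : ZMod (p ^ m), D B' = D B → Jsum χ B' = Jsum χ B := by
    intro B' hDB
    obtain ⟨w, hw⟩ := cast_sub_cast _ hDB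
    set u : ZMod (p ^ m) := 1 + ((p ^ e : ℕ) : ZMod (p ^ m)) * w with hudef
    have hm0 : m ≠ 0 := by omega
    have huunit : IsUnit u := by
      rw [isUnit_cast_iff hp hm0]
      have hz : ZMod.castHom (dvd_pow_self p hm0) (ZMod p)
          ((p ^ e : ℕ) : ZMod (p ^ m)) = 0 := by
        rw [map_natCast, ZMod.natCast_eq_zero_iff]
        exact dvd_pow_self p (by omega)
      rw [hudef, map_add, map_one, map_mul, hz, zero_mul, add_zero]
      exact isUnit_one
    have hen : ((p ^ e : ℕ) : ZMod (p ^ m)) * B = ((p ^ (m - 1) : ℕ) : ZMod (p ^ m)) := by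
      rw [hBdef, ← Nat.cast_mul, ← pow_add]
      have h5 : e + n = m - 1 := by omega
      rw [h5]
    have huB : u * B = B' := by
      rw [hudef, hw]
      linear_combination w * hen
    have hψu : (∏ l, χ l) u = 1 := by
      obtain ⟨hdvd, ψ₀, hψ⟩ := hft
      have h1 := DirichletCharacter.changeLevel_eq_cast_of_dvd ψ₀ hdvd huunit.unit
      rw [huunit.unit_spec] at h1
      rw [hψ, h1]
      have hcast : (ZMod.cast u : ZMod (p ^ e)) = 1 := by
        rw [← ZMod.castHom_apply (h := hdvd), hudef, map_add, map_one, map_mul, map_natCast,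
          ZMod.natCast_self, zero_mul, add_zero]
      rw [hcast, map_one]
    calc Jsum χ B' = Jsum χ (u * B) := by rw [huB]
      _ = (∏ l, χ l) u * Jsum χ B := Jsum_unit_mul χ huunit B
      _ = Jsum χ B := by rw [hψu, one_mul]
  set S : ℂ := ∑ x : Fin k → ZMod (p ^ m), if D (∑ l, x l) = D B then ∏ l, χ l (x l) else 0
    with hSdef
  have step1 : S = 0 := by
    have key : ∀ t : ZMod (p ^ m), S
        = ∑ x : Fin k → ZMod (p ^ m), if D (∑ l, x l) = D B
            then χ i (x i + c * t) * ∏ l ∈ Finset.univ.erase i, χ l (x l)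
            else 0 := by
      intro t
      set δ : Fin k → ZMod (p ^ m) := fun l => if l = i then c * t else 0 with hδ
      rw [hSdef, ← Equiv.sum_comp (Equiv.piCongrRight (fun l : Fin k => Equiv.addRight (δ l)))
        (fun x : Fin k → ZMod (p ^ m) => if D (∑ l, x l) = D B then ∏ l, χ l (x l) else 0)]
      apply Finset.sum_congr rfl
      intro x _
      have happ : ∀ l, (Equiv.piCongrRight (fun l : Fin k => Equiv.addRight (δ l))) x l
          = x l + δ l := fun l => rfl
      simp only [happ]
      have h1 : (∑ l, δ l) = c * t := by
        rw [hδ, Finset.sum_ite_eq' Finset.univ i (fun _ => c * t)]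
        simp
      have hsum : D (∑ l, (x l + δ l)) = D (∑ l, x l) := by
        rw [Finset.sum_add_distrib, h1, map_add, map_mul, hDc, zero_mul, add_zero]
      rw [hsum]
      congr 1
      rw [← Finset.mul_prod_erase Finset.univ (fun l => χ l (x l + δ l)) (Finset.mem_univ i)]
      have hδi : δ i = c * t := by simp [hδ]
      congr 1
      · rw [hδi]
      · apply Finset.prod_congr rfl
        intro l hl
        rw [Finset.mem_erase] at hl
        have hδl : δ l = 0 := by simp [hδ, hl.1]
        rw [hδl, add_zero]
    have h0 : ∑ _t : ZMod (p ^ m), S = 0 := by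
      calc ∑ t : ZMod (p ^ m), S
          = ∑ t : ZMod (p ^ m), ∑ x : Fin k → ZMod (p ^ m), (if D (∑ l, x l) = D B
              then χ i (x i + c * t) * ∏ l ∈ Finset.univ.erase i, χ l (x l)
              else 0) := Finset.sum_congr rfl (fun t _ => key t)
        _ = ∑ x : Fin k → ZMod (p ^ m), ∑ t : ZMod (p ^ m), (if D (∑ l, x l) = D B
              then χ i (x i + c * t) * ∏ l ∈ Finset.univ.erase i, χ l (x l)
              else 0) := Finset.sum_comm
        _ = 0 := by
            apply Finset.sum_eq_zero
            intro x _
            by_cases hB : D (∑ l, x l) = D B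
            · simp only [if_pos hB]
              rw [← Finset.sum_mul, sum_shift_zero hp hm2 hi (x i), zero_mul]
            · simp only [if_neg hB, Finset.sum_const_zero]
    rw [Finset.sum_const, Finset.card_univ, ZMod.card, nsmul_eq_mul] at h0
    rcases mul_eq_zero.mp h0 with h3 | h3
    · exact absurd h3 (Nat.cast_ne_zero.mpr (NeZero.ne _))
    · exact h3
  have step2 : S = ∑ B' : ZMod (p ^ m), if D B' = D B then Jsum χ B' else 0 := by
    have hR : ∀ B' : ZMod (p ^ m), (if D B' = D B then Jsum χ B' else 0)
        = ∑ x : Fin k → ZMod (p ^ m), if (∑ l, x l) = B'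
            then (if D B' = D B then ∏ l, χ l (x l) else 0) else 0 := by
      intro B'
      by_cases hDB : D B' = D B
      · simp [Jsum, hDB]
      · simp [hDB]
    rw [Finset.sum_congr rfl (fun B' _ => hR B'), Finset.sum_comm, hSdef]
    apply Finset.sum_congr rfl
    intro x _
    rw [Finset.sum_ite_eq Finset.univ (∑ l, x l)
      (fun B' => if D B' = D B then ∏ l, χ l (x l) else 0), if_pos (Finset.mem_univ _)]
  have step4 : ∑ B' : ZMod (p ^ m), (if D B' = D B then Jsum χ B' else 0)
      = ∑ B' : ZMod (p ^ m), (if D B' = D B then Jsum χ B else 0) := by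
    apply Finset.sum_congr rfl
    intro B' _
    by_cases hDB : D B' = D B
    · rw [if_pos hDB, if_pos hDB, step3 B' hDB]
    · rw [if_neg hDB, if_neg hDB]
  rw [step2, step4, Finset.sum_ite, Finset.sum_const, Finset.sum_const_zero, add_zero]
    at step1
  have hBmem : B ∈ Finset.univ.filter (fun B' : ZMod (p ^ m) => D B' = D B) :=
    Finset.mem_filter.mpr ⟨Finset.mem_univ _, rfl⟩
  rw [nsmul_eq_mul] at step1
  rcases mul_eq_zero.mp step1 with h3 | h3
  · exact absurd h3 (Nat.cast_ne_zero.mpr (Finset.card_ne_zero_of_mem hBmem))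
  · exact h3
end P2

theorem stmt0 {p m n k : ℕ} [NeZero (p ^ m)] (hp : p.Prime) (hk : 2 ≤ k)
    (hm : n + 2 ≤ m)
    (χ : Fin k → DirichletCharacter ℂ (p ^ m))
    (hprim : ∃ i, (χ i).IsPrimitive)
    (h : (¬ ∀ i, (χ i).IsPrimitive) ∨ (∏ i, χ i).conductor ≠ p ^ (m - n)) :
    Jsum χ ((p ^ n : ℕ) : ZMod (p ^ m)) = 0 := by
  obtain ⟨i, hi⟩ := hprim
  by_cases hall : ∀ l, (χ l).IsPrimitive
  · have hcond : (∏ l, χ l).conductor ≠ p ^ (m - n) := by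
      rcases h with h | h
      · exact absurd hall h
      · exact h
    by_cases hdvd : (∏ l, χ l).conductor ∣ p ^ (m - n)
    · obtain ⟨d, hdm, hcd⟩ := (Nat.dvd_prime_pow hp).mp hdvd
      have hdne : d ≠ m - n := by
        intro he
        exact hcond (by rw [hcd, he])
      have hft : (∏ l, χ l).FactorsThrough (p ^ (m - n - 1)) :=
        factorsThrough_of_dvd (by rw [hcd]; exact pow_dvd_pow p (by omega))
          (pow_dvd_pow p (by omega)) (DirichletCharacter.factorsThrough_conductor _)
      exact caseC hp (by omega) (by omega : m = (m - n - 1) + n + 1) χ i hi hft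
    · exact caseB hp (by omega) χ hdvd
  · push_neg at hall
    obtain ⟨j, hj⟩ := hall
    have hij : i ≠ j := fun he => hj (he ▸ hi)
    exact caseA hp (by omega) χ hij hi hj _
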